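/- arXiv:2308.09645 — 2 statements merged into one kernel-verified Lean document; each statement's English description precedes it below -/
import Mathlib

section
/- For a finite connected simple graph G, dmg(G) = 0 if and only if G contains a universal vertex. -/
open SimpleGraph

/-!
Formalization of the game of Cops and Robber (one cop, one robber) and the damage number.

Round 0: the cop chooses a starting vertex, then the robber chooses a starting vertex.
In each subsequent round the cop moves to an adjacent vertex or passes, after which the
robber moves to an adjacent vertex or passes.  Strategies are modelled as functions of
the full history of positions (most recent first).
-/

/-- A cop strategy: an initial vertex together with a move function taking the history of
cop positions (most recent first, nonempty) and of robber positions (most recent first)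
to the cop's next position. -/
structure CopStrategy (V : Type*) where
  init : V
  move : List V → List V → V

/-- A robber strategy: an initial vertex chosen in response to the cop's initial vertex,
together with a move function taking the history of cop positions (most recent first,
including the cop's move from the current round) and of robber positions (most recent
first) to the robber's next position. -/
structure RobberStrategy (V : Type*) where
  init : V → V
  move : List V → List V → V

variable {V : Type*}

/-- A cop move function is legal for `G` if from any position it either passes or
moves along an edge of `G`. -/
def LegalCopMove (G : SimpleGraph V) (cs : List V → List V → V) : Prop :=
  ∀ (c : V) (ch rh : List V), cs (c :: ch) rh = c ∨ G.Adj c (cs (c :: ch) rh)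

/-- A robber move function is legal for `G` if from any position it either passes or
moves along an edge of `G`. -/
def LegalRobMove (G : SimpleGraph V) (rs : List V → List V → V) : Prop :=
  ∀ (r : V) (ch rh : List V), rs ch (r :: rh) = r ∨ G.Adj r (rs ch (r :: rh))

/-- A legal cop strategy: every move passes or goes along an edge. -/
def CopStrategy.Legal (G : SimpleGraph V) (CS : CopStrategy V) : Prop :=
  LegalCopMove G CS.move

/-- A legal robber strategy: every move passes or goes along an edge. -/
def RobberStrategy.Legal (G : SimpleGraph V) (RS : RobberStrategy V) : Prop :=
  LegalRobMove G RS.move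

/-- `play CS RS n = (cₙ, rₙ, earlier cop positions, earlier robber positions)`:
the state of the game after round `n`, when the cop plays `CS` and the robber plays `RS`.
In each round the cop moves first, then the robber moves. -/
def play (CS : CopStrategy V) (RS : RobberStrategy V) : ℕ → V × V × List V × List V
  | 0 => (CS.init, RS.init CS.init, [], [])
  | n + 1 =>
    let p := play CS RS n
    let c := CS.move (p.1 :: p.2.2.1) (p.2.1 :: p.2.2.2)
    let r := RS.move (c :: p.1 :: p.2.2.1) (p.2.1 :: p.2.2.2)
    (c, r, p.1 :: p.2.2.1, p.2.1 :: p.2.2.2)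

/-- The cop's position after its move in round `n`. -/
def copPos (CS : CopStrategy V) (RS : RobberStrategy V) (n : ℕ) : V := (play CS RS n).1

/-- The robber's position after its move in round `n`. -/
def robPos (CS : CopStrategy V) (RS : RobberStrategy V) (n : ℕ) : V := (play CS RS n).2.1

/-- The robber damages `v`: at the end of some round `n` the robber occupies `v`, having
never been captured up to that point (neither by moving onto the cop, nor by the cop's
move in any round up to and including round `n + 1`); it then passes or moves in
round `n + 1`, damaging `v`. -/
def Damages (CS : CopStrategy V) (RS : RobberStrategy V) (v : V) : Prop :=
  ∃ n, robPos CS RS n = v ∧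
    ∀ k ≤ n, copPos CS RS k ≠ robPos CS RS k ∧ copPos CS RS (k + 1) ≠ robPos CS RS k

/-- The set of vertices damaged by the robber during the play of `CS` against `RS`. -/
def damageSet (CS : CopStrategy V) (RS : RobberStrategy V) : Set V :=
  {v | Damages CS RS v}

/-- The damage number of `G`: the minimum over legal cop strategies of the maximum over
legal robber strategies of the number of distinct damaged vertices. -/
noncomputable def dmg (G : SimpleGraph V) : ℕ :=
  sInf { n | ∃ CS : CopStrategy V, CS.Legal G ∧
    ∀ RS : RobberStrategy V, RS.Legal G → (damageSet CS RS).ncard ≤ n }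

/-- A cop strategy passes during the first round. -/
def CopStrategy.PassesFirst (CS : CopStrategy V) : Prop :=
  ∀ r : V, CS.move [CS.init] [r] = CS.init

/-- The damage number of `G` when the cop is required to pass during the first round. -/
noncomputable def dmg' (G : SimpleGraph V) : ℕ :=
  sInf { n | ∃ CS : CopStrategy V, CS.Legal G ∧ CS.PassesFirst ∧
    ∀ RS : RobberStrategy V, RS.Legal G → (damageSet CS RS).ncard ≤ n }

/-- The eccentricity of a vertex: the maximum distance from `u` to any vertex. -/
noncomputable def ecc (G : SimpleGraph V) (u : V) : ℕ := sSup (Set.range (G.dist u))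

/-- The radius of a graph: the minimum eccentricity over all vertices. -/
noncomputable def gRadius (G : SimpleGraph V) : ℕ := sInf (Set.range (ecc G))

/-- For a finite connected graph `G`, `dmg(G) = 0` if and only if `G` has a universal
vertex. -/
theorem dmg_eq_zero_iff {V : Type*} [Fintype V] (G : SimpleGraph V)
    (hG : G.Connected) :
    dmg G = 0 ↔ ∃ v : V, ∀ w : V, w ≠ v → G.Adj v w := by
  classical
  have hnV : Nonempty V := hG.nonempty
  inhabit V
  constructor
  · intro h0
    by_contra hno
    push_neg at hno
    -- the defining set is nonempty
    have hSne : { n | ∃ CS : CopStrategy V, CS.Legal G ∧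
        ∀ RS : RobberStrategy V, RS.Legal G → (damageSet CS RS).ncard ≤ n }.Nonempty := by
      refine ⟨Fintype.card V, ⟨default, fun ch _ => ch.headI⟩, ?_, ?_⟩
      · intro c ch rh; left; rfl
      · intro RS _
        calc (damageSet ⟨default, fun ch _ => ch.headI⟩ RS).ncard
            ≤ (Set.univ : Set V).ncard :=
              Set.ncard_le_ncard (Set.subset_univ _) Set.finite_univ
          _ = Fintype.card V := by simp [Set.ncard_univ]
    have h0mem : 0 ∈ { n | ∃ CS : CopStrategy V, CS.Legal G ∧
        ∀ RS : RobberStrategy V, RS.Legal G → (damageSet CS RS).ncard ≤ n } := by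
      rcases Nat.sInf_eq_zero.mp h0 with h | h
      · exact h
      · exact absurd h (Set.nonempty_iff_ne_empty.mp hSne)
    obtain ⟨CS, hCS, hall⟩ := h0mem
    obtain ⟨w, hw, hwa⟩ := hno CS.init
    set RS : RobberStrategy V := ⟨fun _ => w, fun _ rh => rh.headI⟩ with hRSdef
    have hRS : RS.Legal G := by intro r ch rh; left; rfl
    have hD : Damages CS RS w := by
      refine ⟨0, rfl, ?_⟩
      intro k hk
      interval_cases k
      have hcop0 : copPos CS RS 0 = CS.init := rfl
      have hrob0 : robPos CS RS 0 = w := rfl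
      constructor
      · rw [hcop0, hrob0]; exact fun h => hw h.symm
      · have hcop1 : copPos CS RS 1 = CS.move [CS.init] [w] := rfl
        rw [hcop1, hrob0]
        rcases hCS CS.init [] [w] with h | h
        · rw [h]; exact fun h' => hw h'.symm
        · intro heq; rw [heq] at h; exact hwa h
    have hpos : 0 < (damageSet CS RS).ncard :=
      (Set.ncard_pos (Set.toFinite _)).mpr ⟨w, hD⟩
    have := hall RS hRS
    omega
  · rintro ⟨v, hv⟩
    set CS : CopStrategy V :=
      ⟨v, fun ch rh => if G.Adj ch.headI rh.headI then rh.headI else ch.headI⟩ with hCSdef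
    have hCS : CS.Legal G := by
      intro c ch rh
      by_cases h : G.Adj c rh.headI
      · right; set_option linter.unnecessarySimpa false in simpa [hCSdef, h] using h
      · left; simp [hCSdef, h]
    have hempty : ∀ RS : RobberStrategy V, damageSet CS RS = ∅ := by
      intro RS
      ext x
      simp only [damageSet, Set.mem_setOf_eq, Set.mem_empty_iff_false, iff_false]
      rintro ⟨n, -, hsafe⟩
      obtain ⟨h1, h2⟩ := hsafe 0 (Nat.zero_le n)
      have hcop0 : copPos CS RS 0 = v := rfl
      have hrob0 : robPos CS RS 0 = RS.init v := rfl
      by_cases hr : RS.init v = v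
      · exact h1 (by rw [hcop0, hrob0, hr])
      · have hadj : G.Adj v (RS.init v) := hv _ hr
        have hcop1 : copPos CS RS 1 = CS.move [v] [RS.init v] := rfl
        apply h2
        rw [hcop1, hrob0]
        simp [hCSdef, hadj]
    have hmem : 0 ∈ { n | ∃ CS : CopStrategy V, CS.Legal G ∧
        ∀ RS : RobberStrategy V, RS.Legal G → (damageSet CS RS).ncard ≤ n } :=
      ⟨CS, hCS, fun RS _ => by rw [hempty RS]; simp⟩
    exact Nat.sInf_eq_zero.mpr (Or.inl hmem)
end

section
/- If G is a finite connected simple graph with dmg(G) = 1, then rad(G) = 2. -/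
open SimpleGraph

variable {V : Type*}

section Aux

variable {V : Type*}

lemma copPos_zero (CS : CopStrategy V) (RS : RobberStrategy V) : copPos CS RS 0 = CS.init := rfl

lemma robPos_zero (CS : CopStrategy V) (RS : RobberStrategy V) :
    robPos CS RS 0 = RS.init CS.init := rfl

lemma copPos_succ (CS : CopStrategy V) (RS : RobberStrategy V) (n : ℕ) :
    copPos CS RS (n+1) =
      CS.move (copPos CS RS n :: (play CS RS n).2.2.1)
        (robPos CS RS n :: (play CS RS n).2.2.2) := rfl

lemma robPos_succ (CS : CopStrategy V) (RS : RobberStrategy V) (n : ℕ) :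
    robPos CS RS (n+1) =
      RS.move (copPos CS RS (n+1) :: copPos CS RS n :: (play CS RS n).2.2.1)
        (robPos CS RS n :: (play CS RS n).2.2.2) := rfl

/-- A legal cop makes steps that pass or move along an edge. -/
lemma copPos_step {G : SimpleGraph V} {CS : CopStrategy V} (hCS : CS.Legal G)
    (RS : RobberStrategy V) (n : ℕ) :
    copPos CS RS (n+1) = copPos CS RS n ∨ G.Adj (copPos CS RS n) (copPos CS RS (n+1)) := by
  rw [copPos_succ]
  exact hCS (copPos CS RS n) (play CS RS n).2.2.1 (robPos CS RS n :: (play CS RS n).2.2.2)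

/-- A legal robber makes steps that pass or move along an edge. -/
lemma robPos_step {G : SimpleGraph V} {RS : RobberStrategy V} (hRS : RS.Legal G)
    (CS : CopStrategy V) (n : ℕ) :
    robPos CS RS (n+1) = robPos CS RS n ∨ G.Adj (robPos CS RS n) (robPos CS RS (n+1)) := by
  rw [robPos_succ]
  exact hRS (robPos CS RS n) (copPos CS RS (n+1) :: copPos CS RS n :: (play CS RS n).2.2.1)
    (play CS RS n).2.2.2

/-- A legal cop is within distance `n` of its start after round `n`. -/
lemma cop_dist_le {G : SimpleGraph V} (hG : G.Connected) {CS : CopStrategy V}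
    (hCS : CS.Legal G) (RS : RobberStrategy V) : ∀ n, G.dist CS.init (copPos CS RS n) ≤ n := by
  intro n
  induction n with
  | zero => simp [copPos_zero]
  | succ n ih =>
    rcases copPos_step hCS RS n with h | h
    · rw [h]; omega
    · calc G.dist CS.init (copPos CS RS (n+1))
          ≤ G.dist CS.init (copPos CS RS n) + G.dist (copPos CS RS n) (copPos CS RS (n+1)) :=
            hG.dist_triangle
        _ ≤ n + 1 := by
            have : G.dist (copPos CS RS n) (copPos CS RS (n+1)) = 1 :=
              SimpleGraph.dist_eq_one_iff_adj.mpr h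
            omega

open Classical in
/-- The chasing cop strategy from a dominating vertex `w`. -/
noncomputable def chase (G : SimpleGraph V) (w : V) : CopStrategy V where
  init := w
  move := fun ch rh =>
    match ch, rh with
    | c :: _, r :: _ => if r = c ∨ G.Adj c r then r else c
    | c :: _, [] => c
    | [], _ => w

open Classical in
lemma chase_move_cons (G : SimpleGraph V) (w c r : V) (ch rh : List V) :
    (chase G w).move (c :: ch) (r :: rh) = if r = c ∨ G.Adj c r then r else c := rfl

lemma chase_move_nil (G : SimpleGraph V) (w c : V) (ch : List V) :
    (chase G w).move (c :: ch) [] = c := rfl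

lemma chase_legal (G : SimpleGraph V) (w : V) : (chase G w).Legal G := by
  classical
  intro c ch rh
  cases rh with
  | nil => left; exact chase_move_nil G w c ch
  | cons r t =>
    rw [chase_move_cons]
    by_cases h : r = c ∨ G.Adj c r
    · rw [if_pos h]
      rcases h with h | h
      · left; exact h
      · right; exact h
    · left; rw [if_neg h]

lemma chase_no_damage {G : SimpleGraph V} (w : V)
    (hw : ∀ v : V, v = w ∨ G.Adj w v) {RS : RobberStrategy V} (hRS : RS.Legal G) :
    damageSet (chase G w) RS = ∅ := by
  classical
  have inv : ∀ n, (robPos (chase G w) RS n = copPos (chase G w) RS n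
        ∨ G.Adj (copPos (chase G w) RS n) (robPos (chase G w) RS n))
      ∧ copPos (chase G w) RS (n+1) = robPos (chase G w) RS n := by
    intro n
    induction n with
    | zero =>
      have h0 : robPos (chase G w) RS 0 = copPos (chase G w) RS 0
          ∨ G.Adj (copPos (chase G w) RS 0) (robPos (chase G w) RS 0) := by
        rw [copPos_zero]
        exact hw _
      refine ⟨h0, ?_⟩
      rw [copPos_succ, chase_move_cons, if_pos]
      rw [copPos_zero] at h0
      exact h0
    | succ n ih =>
      have hstep := robPos_step hRS (chase G w) n
      have h1 : robPos (chase G w) RS (n+1) = copPos (chase G w) RS (n+1)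
          ∨ G.Adj (copPos (chase G w) RS (n+1)) (robPos (chase G w) RS (n+1)) := by
        rw [ih.2]
        exact hstep
      refine ⟨h1, ?_⟩
      rw [copPos_succ, chase_move_cons, if_pos]
      exact h1
  ext v
  simp only [damageSet, Set.mem_setOf_eq, Set.mem_empty_iff_false, iff_false]
  rintro ⟨n, _, hkey⟩
  exact (hkey n le_rfl).2 (inv n).2

end Aux

/-- If `G` is a finite connected graph with `dmg(G) = 1`, then `rad(G) = 2`. -/
theorem radius_eq_two_of_dmg_eq_one {V : Type*} [Fintype V] (G : SimpleGraph V)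
    (hG : G.Connected) (h1 : dmg G = 1) : gRadius G = 2 := by
  classical
  have hne : Nonempty V := hG.nonempty
  unfold dmg at h1
  set S : Set ℕ := { n | ∃ CS : CopStrategy V, CS.Legal G ∧
    ∀ RS : RobberStrategy V, RS.Legal G → (damageSet CS RS).ncard ≤ n } with hS
  -- Part 1: every vertex has eccentricity at least 2
  have hecc_ge : ∀ w : V, 2 ≤ ecc G w := by
    intro w
    by_contra hlt
    push_neg at hlt
    have hdom : ∀ v : V, v = w ∨ G.Adj w v := by
      intro v
      have hd : G.dist w v ≤ 1 := by
        have : G.dist w v ≤ ecc G w :=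
          le_csSup ((Set.finite_range (G.dist w)).bddAbove) ⟨v, rfl⟩
        omega
      interval_cases h : G.dist w v
      · left; exact (hG.dist_eq_zero_iff.mp h).symm
      · right; exact SimpleGraph.dist_eq_one_iff_adj.mp h
    have h0 : 0 ∈ S := by
      refine ⟨chase G w, chase_legal G w, fun RS hRS => ?_⟩
      rw [chase_no_damage w hdom hRS]
      simp
    have := Nat.sInf_le h0
    omega
  -- Part 2: extract an optimal cop strategy
  have hSne : S.Nonempty := by
    by_contra hemp
    rw [Set.not_nonempty_iff_eq_empty] at hemp
    rw [hemp, Nat.sInf_empty] at h1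
    exact one_ne_zero h1.symm
  have hmem : (1 : ℕ) ∈ S := h1 ▸ Nat.sInf_mem hSne
  obtain ⟨CS, hCS, hbound⟩ := hmem
  -- the cop's starting vertex has eccentricity at most 2
  have hecc_le : ∀ v : V, G.dist CS.init v ≤ 2 := by
    intro u
    by_contra hfar
    push_neg at hfar
    have hfar : 3 ≤ G.dist CS.init u := hfar
    -- find a neighbour y of u
    obtain ⟨wk⟩ : G.Reachable u CS.init := hG u CS.init
    cases wk with
    | nil =>
      rw [SimpleGraph.dist_comm, SimpleGraph.dist_self] at hfar; omega
    | @cons _ y _ hadj p =>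
      -- hadj : G.Adj u y
      have hyu : G.Adj y u := hadj.symm
      have hne_uy : u ≠ y := hadj.ne
      have hdy : 2 ≤ G.dist CS.init y := by
        have htri : G.dist CS.init u ≤ G.dist CS.init y + G.dist y u := hG.dist_triangle
        have : G.dist y u = 1 := SimpleGraph.dist_eq_one_iff_adj.mpr hyu
        omega
      -- the robber: start at y, move to u, then stay at u forever
      set RS : RobberStrategy V :=
        ⟨fun _ => y, fun _ rh => if rh.headD y = y then u else rh.headD y⟩ with hRS
      have hRSlegal : RS.Legal G := by
        intro r ch rh
        show (if r = y then u else r) = r ∨ G.Adj r (if r = y then u else r)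
        by_cases h : r = y
        · right; rw [if_pos h, h]; exact hyu
        · left; rw [if_neg h]
      have hrob0 : robPos CS RS 0 = y := rfl
      have hrob1 : robPos CS RS 1 = u := by
        rw [robPos_succ]
        show (if (robPos CS RS 0) = y then u else (robPos CS RS 0)) = u
        rw [hrob0, if_pos rfl]
      have hcd : ∀ n, G.dist CS.init (copPos CS RS n) ≤ n := cop_dist_le hG hCS RS
      have hcop_ne_y : ∀ k ≤ 1, copPos CS RS k ≠ y := by
        intro k hk h
        have := hcd k
        rw [h] at this
        omega
      have hcop_ne_u : ∀ k ≤ 2, copPos CS RS k ≠ u := by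
        intro k hk h
        have := hcd k
        rw [h] at this
        omega
      have hdy_dam : Damages CS RS y := by
        refine ⟨0, hrob0, ?_⟩
        intro k hk
        interval_cases k
        rw [hrob0]
        exact ⟨hcop_ne_y 0 (by omega), hcop_ne_y 1 (by omega)⟩
      have hdu_dam : Damages CS RS u := by
        refine ⟨1, hrob1, ?_⟩
        intro k hk
        interval_cases k
        · rw [hrob0]
          exact ⟨hcop_ne_y 0 (by omega), hcop_ne_y 1 (by omega)⟩
        · rw [hrob1]
          exact ⟨hcop_ne_u 1 (by omega), hcop_ne_u 2 (by omega)⟩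
      have hsub : {y, u} ⊆ damageSet CS RS := by
        rintro v (rfl | rfl)
        · exact hdy_dam
        · exact hdu_dam
      have h2 : 2 ≤ (damageSet CS RS).ncard := by
        have := Set.ncard_le_ncard hsub (Set.toFinite _)
        rwa [Set.ncard_pair (Ne.symm hne_uy)] at this
      have := hbound RS hRSlegal
      omega
  -- conclude
  have heccle2 : ecc G CS.init ≤ 2 := by
    unfold ecc
    apply csSup_le (Set.range_nonempty _)
    rintro _ ⟨v, rfl⟩
    exact hecc_le v
  have hle : gRadius G ≤ 2 := by
    have : gRadius G ≤ ecc G CS.init := Nat.sInf_le ⟨CS.init, rfl⟩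
    omega
  have hge : 2 ≤ gRadius G := by
    unfold gRadius
    apply le_csInf (Set.range_nonempty _)
    rintro _ ⟨w, rfl⟩
    exact hecc_ge w
  omega
end
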